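/- Let G be a simple graph on n vertices with e edges. If n is even, then f(G) is even; if n is odd, then f(G) ≡ e (mod 2). -/

import Mathlib

open Finset

open Classical in
/-- A triple of distinct vertices is *frustrated* if it induces an odd number of edges. -/
noncomputable def frustrated {V : Type*} (G : SimpleGraph V) (u v w : V) : Prop :=
  Odd ((if G.Adj u v then 1 else 0) + (if G.Adj u w then 1 else 0) +
       (if G.Adj v w then 1 else 0) : ℕ)

/-- The number of frustrated triangles of `G`: the number of 3-element vertex subsets
inducing an odd number of edges. -/
noncomputable def fCount {V : Type*} [Fintype V] [DecidableEq V] (G : SimpleGraph V) : ℕ := by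
  classical
  exact ((Finset.univ.powersetCard 3).filter
    (fun s : Finset V => ∃ u v w : V, u ≠ v ∧ u ≠ w ∧ v ≠ w ∧ s = {u, v, w} ∧
      frustrated G u v w)).card

open Classical

section Aux

variable {V : Type*} [Fintype V] [DecidableEq V]

/-- The edge finset (classically). -/
noncomputable def eFinset (G : SimpleGraph V) : Finset (Sym2 V) :=
  (Set.toFinite G.edgeSet).toFinset

lemma mem_eFinset {G : SimpleGraph V} {e : Sym2 V} : e ∈ eFinset G ↔ e ∈ G.edgeSet :=
  Set.Finite.mem_toFinset _

/-- The number of edges inside a vertex subset. -/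
noncomputable def inCount (G : SimpleGraph V) (s : Finset V) : ℕ :=
  ((eFinset G).filter (fun e => ∀ x ∈ e, x ∈ s)).card

lemma inCount_triple (G : SimpleGraph V) {u v w : V} (huv : u ≠ v) (huw : u ≠ w)
    (hvw : v ≠ w) :
    inCount G {u, v, w} =
      (if G.Adj u v then 1 else 0) + (if G.Adj u w then 1 else 0) +
      (if G.Adj v w then 1 else 0) := by
  have hset : (eFinset G).filter (fun e => ∀ x ∈ e, x ∈ ({u, v, w} : Finset V)) =
      ({s(u,v), s(u,w), s(v,w)} : Finset (Sym2 V)).filter (fun e => e ∈ G.edgeSet) := by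
    ext p
    induction p with
    | h a b =>
      simp only [mem_filter, mem_eFinset, Finset.mem_insert, Finset.mem_singleton]
      constructor
      · rintro ⟨he, hsub⟩
        have hab : a ≠ b := G.ne_of_adj (by rwa [SimpleGraph.mem_edgeSet] at he)
        have ha := hsub a (by simp)
        have hb := hsub b (by simp)
        refine ⟨?_, he⟩
        simp only [Sym2.eq_iff]
        rcases ha with rfl | rfl | rfl <;> rcases hb with rfl | rfl | rfl <;> tauto
      · rintro ⟨hmem, he⟩
        refine ⟨he, ?_⟩
        intro x hx
        rcases hmem with h | h | h <;> rw [Sym2.eq_iff] at h <;>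
          rcases h with ⟨rfl, rfl⟩ | ⟨rfl, rfl⟩ <;> rw [Sym2.mem_iff] at hx <;>
          rcases hx with rfl | rfl <;> simp
  have h1 : s(u,v) ∉ ({s(u,w), s(v,w)} : Finset (Sym2 V)) := by
    simp [Sym2.eq_iff]; tauto
  have h2 : s(u,w) ∉ ({s(v,w)} : Finset (Sym2 V)) := by
    simp [Sym2.eq_iff]; tauto
  rw [inCount, hset, Finset.card_filter, Finset.sum_insert h1, Finset.sum_insert h2,
    Finset.sum_singleton]
  simp [SimpleGraph.mem_edgeSet, add_assoc]

lemma frustrated_iff_odd (G : SimpleGraph V) {s : Finset V} (hs : s.card = 3) :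
    (∃ u v w : V, u ≠ v ∧ u ≠ w ∧ v ≠ w ∧ s = {u, v, w} ∧ frustrated G u v w) ↔
      Odd (inCount G s) := by
  constructor
  · rintro ⟨u, v, w, huv, huw, hvw, rfl, hf⟩
    rwa [inCount_triple G huv huw hvw]
  · intro hodd
    obtain ⟨u, v, w, huv, huw, hvw, rfl⟩ := Finset.card_eq_three.mp hs
    exact ⟨u, v, w, huv, huw, hvw, rfl, by rwa [frustrated, ← inCount_triple G huv huw hvw]⟩

lemma card_supersets {a b : V} (hab : a ≠ b) :
    ((Finset.univ.powersetCard 3).filter (fun s : Finset V => a ∈ s ∧ b ∈ s)).card =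
      Fintype.card V - 2 := by
  have h := Finset.card_bij
    (i := fun (x : V) (_ : x ∈ Finset.univ \ {a, b}) => insert x ({a, b} : Finset V))
    (s := Finset.univ \ ({a, b} : Finset V))
    (t := (Finset.univ.powersetCard 3).filter (fun s : Finset V => a ∈ s ∧ b ∈ s))
    ?_ ?_ ?_
  · rw [← h, Finset.card_sdiff_of_subset (Finset.subset_univ _), Finset.card_univ,
      Finset.card_pair hab]
  · intro x hx
    simp only [Finset.mem_sdiff, Finset.mem_insert, Finset.mem_singleton] at hx
    push_neg at hx
    simp only [Finset.mem_filter, Finset.mem_powersetCard_univ, Finset.mem_insert,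
      Finset.mem_singleton]
    refine ⟨?_, by tauto, by tauto⟩
    rw [Finset.card_insert_of_notMem (by simp [hx.2.1, hx.2.2]), Finset.card_pair hab]
  · intro x hx y hy hxy
    simp only [Finset.mem_sdiff, Finset.mem_insert, Finset.mem_singleton] at hx hy
    push_neg at hx hy
    have : x ∈ insert y ({a, b} : Finset V) := by
      rw [show insert y ({a,b} : Finset V) = insert x ({a,b} : Finset V) from hxy.symm]
      exact Finset.mem_insert_self x _
    simp only [Finset.mem_insert, Finset.mem_singleton] at this
    tauto
  · intro s hs
    simp only [Finset.mem_filter, Finset.mem_powersetCard_univ] at hs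
    obtain ⟨hcard, haa, hbb⟩ := hs
    have hsub : ({a, b} : Finset V) ⊆ s := by
      intro x hx
      simp only [Finset.mem_insert, Finset.mem_singleton] at hx
      rcases hx with rfl | rfl <;> assumption
    have : (s \ {a, b}).Nonempty := by
      rw [← Finset.card_pos, Finset.card_sdiff_of_subset hsub, hcard, Finset.card_pair hab]
      norm_num
    obtain ⟨x, hx⟩ := this
    have hxm := Finset.mem_sdiff.mp hx
    refine ⟨x, by simp [hxm.2, hxm.1], ?_⟩
    apply Finset.eq_of_subset_of_card_le
    · intro y hy
      simp only [Finset.mem_insert, Finset.mem_singleton] at hy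
      rcases hy with rfl | rfl | rfl
      exacts [hxm.1, haa, hbb]
    · rw [hcard, Finset.card_insert_of_notMem (by simpa using hxm.2), Finset.card_pair hab]

lemma fCount_cast (G : SimpleGraph V) :
    (fCount G : ZMod 2) = ((eFinset G).card * (Fintype.card V - 2) : ℕ) := by
  have hfc : fCount G = ((Finset.univ.powersetCard 3).filter
      (fun s : Finset V => Odd (inCount G s))).card := by
    unfold fCount
    congr 1
    apply Finset.filter_congr
    intro s hs
    exact frustrated_iff_odd G (Finset.mem_powersetCard_univ.mp hs)
  have key : ∀ k : ℕ, ((if Odd k then 1 else 0 : ℕ) : ZMod 2) = (k : ZMod 2) := by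
    intro k
    rw [← ZMod.natCast_mod k 2]
    rcases Nat.even_or_odd k with h | h
    · simp [Nat.not_odd_iff_even.mpr h, Nat.even_iff.mp h]
    · simp [h, Nat.odd_iff.mp h]
  rw [hfc, Finset.card_filter, Nat.cast_sum]
  rw [Finset.sum_congr rfl (fun s _ => key (inCount G s))]
  have hin : ∀ s : Finset V, ((inCount G s : ℕ) : ZMod 2) =
      ∑ e ∈ eFinset G, ((if (∀ x ∈ e, x ∈ s) then 1 else 0 : ℕ) : ZMod 2) := by
    intro s
    rw [inCount, Finset.card_filter, Nat.cast_sum]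
  rw [Finset.sum_congr rfl (fun s _ => hin s), Finset.sum_comm]
  have inner : ∀ e ∈ eFinset G,
      (∑ s ∈ Finset.univ.powersetCard 3,
        ((if (∀ x ∈ e, x ∈ s) then 1 else 0 : ℕ) : ZMod 2)) =
      ((Fintype.card V - 2 : ℕ) : ZMod 2) := by
    intro e
    induction e with
    | h a b =>
      intro he
      have hab : a ≠ b := G.ne_of_adj (by rwa [← SimpleGraph.mem_edgeSet, ← mem_eFinset])
      rw [← Nat.cast_sum, ← Finset.card_filter]
      have hfe : (Finset.univ.powersetCard 3).filter
          (fun s : Finset V => ∀ x ∈ (s(a,b) : Sym2 V), x ∈ s) =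
          (Finset.univ.powersetCard 3).filter (fun s : Finset V => a ∈ s ∧ b ∈ s) := by
        apply Finset.filter_congr
        intro s _
        simp [Sym2.mem_iff]
      rw [hfe, card_supersets hab]
  rw [Finset.sum_congr rfl inner, Finset.sum_const, nsmul_eq_mul, ← Nat.cast_mul]

end Aux

theorem fCount_parity
    (n : ℕ) (G : SimpleGraph (Fin n)) (e : ℕ) (he : G.edgeSet.ncard = e) :
    (Even n → Even (fCount G)) ∧ (Odd n → fCount G % 2 = e % 2) := by
  have hcard : (eFinset G).card = e := by
    rw [← he, Set.ncard_eq_toFinset_card G.edgeSet (Set.toFinite _)]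
    rfl
  have hmod : fCount G % 2 = (e * (n - 2)) % 2 := by
    have := fCount_cast G
    rw [hcard, Fintype.card_fin] at this
    exact (ZMod.natCast_eq_natCast_iff _ _ _).mp this
  constructor
  · intro hn
    rw [Nat.even_iff] at hn ⊢
    have h2 : (n - 2) % 2 = 0 := by omega
    rw [hmod, Nat.mul_mod, h2]
    simp
  · intro hn
    rw [Nat.odd_iff] at hn
    rcases eq_or_lt_of_le (Nat.one_le_iff_ne_zero.mpr (by omega : n ≠ 0)) with h1 | h1
    · -- n = 1 : no edges
      have : G.edgeSet = ∅ := by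
        ext p
        induction p with
        | h x y =>
          simp only [SimpleGraph.mem_edgeSet, Set.mem_empty_iff_false, iff_false]
          intro h
          exact G.ne_of_adj h (by subst h1; exact Subsingleton.elim x y)
      rw [this] at he
      simp at he
      subst he
      simpa using hmod
    · have h3 : 3 ≤ n := by omega
      have h2 : (n - 2) % 2 = 1 := by omega
      rw [hmod, Nat.mul_mod, h2, mul_one]
      omega
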